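/- Let n ≥ 3 and let v₀, …, v_{n−1} be points of the Euclidean plane in general position (pairwise distinct, no three collinear), forming the closed polygon with segments sᵢ = [vᵢ, v_{(i+1) mod n}]. Then the set of crossing points of the polygon — points of the plane lying on two non-adjacent segments sᵢ and sⱼ (indices with j ≢ i, i±1 (mod n)) — is finite, and its cardinality is at most n(n−3)/2. -/

import Mathlib

/-- The crossing points of a closed polygon on `n ≥ 3` points in general position in the
Euclidean plane form a finite set of cardinality at most `n(n-3)/2`. -/
theorem polygon_crossing_points_finite_card_le
    (n : ℕ) [NeZero n] (hn : 3 ≤ n) (v : Fin n → EuclideanSpace ℝ (Fin 2))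
    (hdist : ∀ i j : Fin n, i ≠ j → v i ≠ v j)
    (hcol : ∀ i j k : Fin n, i ≠ j → j ≠ k → i ≠ k →
      ¬ Collinear ℝ ({v i, v j, v k} : Set (EuclideanSpace ℝ (Fin 2)))) :
    ({p : EuclideanSpace ℝ (Fin 2) | ∃ i j : Fin n,
        j ≠ i ∧ j ≠ i + 1 ∧ i ≠ j + 1 ∧
        p ∈ segment ℝ (v i) (v (i + 1)) ∧ p ∈ segment ℝ (v j) (v (j + 1))}).Finite ∧
    ({p : EuclideanSpace ℝ (Fin 2) | ∃ i j : Fin n,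
        j ≠ i ∧ j ≠ i + 1 ∧ i ≠ j + 1 ∧
        p ∈ segment ℝ (v i) (v (i + 1)) ∧ p ∈ segment ℝ (v j) (v (j + 1))}).ncard
      ≤ n * (n - 3) / 2 := by
  have h1v : ((1 : Fin n)).val = 1 := by
    rw [Fin.val_one', Nat.mod_eq_of_lt (by omega)]
  have h2v : ((2 : Fin n)).val = 2 := by
    exact Nat.mod_eq_of_lt (show 2 < n by omega)
  have h10 : (1 : Fin n) ≠ 0 := by intro h; rw [Fin.ext_iff, h1v] at h; simp at h
  have h20 : (2 : Fin n) ≠ 0 := by intro h; rw [Fin.ext_iff, h2v] at h; simp at h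
  -- key : intersections of non-adjacent segments are subsingletons
  have key : ∀ i j : Fin n, j ≠ i → j ≠ i + 1 → i ≠ j + 1 →
      (segment ℝ (v i) (v (i+1)) ∩ segment ℝ (v j) (v (j+1))).Subsingleton := by
    intro i j hji hji1 hij1 p hp q hq
    by_contra hpq
    have hpL : p ∈ line[ℝ, v i, v (i+1)] := (mem_segment_iff_wbtw.1 hp.1).mem_affineSpan
    have hqL : q ∈ line[ℝ, v i, v (i+1)] := (mem_segment_iff_wbtw.1 hq.1).mem_affineSpan
    have hpL' : p ∈ line[ℝ, v j, v (j+1)] := (mem_segment_iff_wbtw.1 hp.2).mem_affineSpan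
    have hqL' : q ∈ line[ℝ, v j, v (j+1)] := (mem_segment_iff_wbtw.1 hq.2).mem_affineSpan
    have c1 : Collinear ℝ ({p, q, v i, v (i+1)} : Set _) :=
      collinear_insert_insert_of_mem_affineSpan_pair hpL hqL
    have c2 : Collinear ℝ ({p, q, v j, v (j+1)} : Set _) :=
      collinear_insert_insert_of_mem_affineSpan_pair hpL' hqL'
    have hvi : v i ∈ line[ℝ, p, q] :=
      c1.mem_affineSpan_of_mem_of_ne (by simp) (by simp) (by simp) hpq
    have hvj : v j ∈ line[ℝ, p, q] :=
      c2.mem_affineSpan_of_mem_of_ne (by simp) (by simp) (by simp) hpq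
    have hvj1 : v (j+1) ∈ line[ℝ, p, q] :=
      c2.mem_affineSpan_of_mem_of_ne (by simp) (by simp) (by simp) hpq
    have hjj1 : j ≠ j + 1 := fun h => h10 (left_eq_add.mp h)
    exact hcol i j (j+1) hji.symm hjj1 hij1
      (collinear_triple_of_mem_affineSpan_pair hvi hvj hvj1)
  classical
  set T : Fin n × Fin n → Set (EuclideanSpace ℝ (Fin 2)) :=
    fun q => segment ℝ (v q.1) (v (q.1+1)) ∩ segment ℝ (v q.2) (v (q.2+1)) with hT
  set g : Fin n × Fin n → EuclideanSpace ℝ (Fin 2) :=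
    fun q => if h : (T q).Nonempty then h.some else v 0 with hg
  set P : Finset (Fin n × Fin n) :=
    Finset.univ.filter (fun q => q.1.val < q.2.val ∧ q.2 ≠ q.1 + 1 ∧ q.1 ≠ q.2 + 1) with hP
  -- the crossing set is contained in the image of P under g
  have hsub : ({p : EuclideanSpace ℝ (Fin 2) | ∃ i j : Fin n,
        j ≠ i ∧ j ≠ i + 1 ∧ i ≠ j + 1 ∧
        p ∈ segment ℝ (v i) (v (i + 1)) ∧ p ∈ segment ℝ (v j) (v (j + 1))})
      ⊆ ↑(P.image g) := by
    rintro p ⟨i, j, h1, h2, h3, hpi, hpj⟩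
    have main : ∀ pr : Fin n × Fin n, pr ∈ P → p ∈ T pr → p ∈ ↑(P.image g) := by
      intro pr hpr hp
      have hne : (T pr).Nonempty := ⟨p, hp⟩
      have hgpr : g pr = hne.some := dif_pos hne
      have hprP : pr.2 ≠ pr.1 ∧ pr.2 ≠ pr.1 + 1 ∧ pr.1 ≠ pr.2 + 1 := by
        rw [hP, Finset.mem_filter] at hpr
        exact ⟨fun h => absurd (congrArg Fin.val h) (by omega), hpr.2.2.1, hpr.2.2.2⟩
      have hps : p = g pr := by
        rw [hgpr]
        exact key pr.1 pr.2 hprP.1 hprP.2.1 hprP.2.2 hp hne.some_mem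
      exact Finset.mem_image.mpr ⟨pr, hpr, hps.symm⟩
    rcases lt_trichotomy i.val j.val with hlt | heq | hgt
    · exact main (i, j) (by rw [hP, Finset.mem_filter]; exact ⟨Finset.mem_univ _, hlt, h2, h3⟩) ⟨hpi, hpj⟩
    · exact absurd (Fin.ext heq).symm h1
    · exact main (j, i) (by rw [hP, Finset.mem_filter]; exact ⟨Finset.mem_univ _, hgt, h3, h2⟩) ⟨hpj, hpi⟩
  -- counting
  have hA : ∀ i : Fin n, i + 1 ≠ i := fun i h => h10 (add_eq_left.mp h)
  have hB : ∀ i : Fin n, i - 1 ≠ i := fun i h => h10 (sub_eq_self.mp h)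
  have hC : ∀ i : Fin n, i + 1 ≠ i - 1 := by
    intro i h
    have h2 := sub_eq_zero_of_eq h
    rw [show i + 1 - (i - 1) = 2 by open Fin.CommRing in ring] at h2
    exact h20 h2
  have hPcard : P.card ≤ n * (n - 3) / 2 := by
    rw [Nat.le_div_iff_mul_le (by norm_num)]
    set Q : Finset (Fin n × Fin n) :=
      Finset.univ.filter (fun q => q.1 ≠ q.2 ∧ q.2 ≠ q.1 + 1 ∧ q.1 ≠ q.2 + 1) with hQ
    have hPQ : P ⊆ Q := by
      intro q hq
      rw [hP, Finset.mem_filter] at hq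
      rw [hQ, Finset.mem_filter]
      exact ⟨Finset.mem_univ _,
        fun h => absurd (congrArg Fin.val h) (by omega), hq.2.2.1, hq.2.2.2⟩
    have hP'Q : P.image Prod.swap ⊆ Q := by
      intro q hq
      rw [Finset.mem_image] at hq
      obtain ⟨r, hr, hrq⟩ := hq
      rw [hP, Finset.mem_filter] at hr
      rw [hQ, Finset.mem_filter]
      subst hrq
      exact ⟨Finset.mem_univ _,
        fun h => absurd (congrArg Fin.val h) (by simp; omega), hr.2.2.2, hr.2.2.1⟩
    have hdisj : Disjoint P (P.image Prod.swap) := by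
      rw [Finset.disjoint_left]
      intro q hq hq'
      rw [Finset.mem_image] at hq'
      obtain ⟨r, hr, hrq⟩ := hq'
      rw [hP, Finset.mem_filter] at hq hr
      subst hrq
      simp only [Prod.fst_swap, Prod.snd_swap] at hq
      omega
    have hunion : P.card * 2 = (P ∪ P.image Prod.swap).card := by
      rw [Finset.card_union_of_disjoint hdisj,
        Finset.card_image_of_injective _ Prod.swap_injective]
      ring
    have hQcard : Q.card ≤ n * (n - 3) := by
      rw [Finset.card_eq_sum_card_fiberwise
        (f := Prod.fst) (t := Finset.univ) (fun x _ => Finset.mem_univ _)]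
      have hfib : ∀ i : Fin n, (Q.filter fun q => q.1 = i).card ≤ n - 3 := by
        intro i
        have hcard3 : ({i, i + 1, i - 1} : Finset (Fin n)).card = 3 := by
          rw [Finset.card_insert_of_notMem (by
              simp only [Finset.mem_insert, Finset.mem_singleton]
              push_neg
              exact ⟨(hA i).symm, (hB i).symm⟩),
            Finset.card_insert_of_notMem (by simp [hC i]), Finset.card_singleton]
        have hle : (Q.filter fun q => q.1 = i).card
            ≤ (({i, i + 1, i - 1} : Finset (Fin n))ᶜ).card := by
          apply Finset.card_le_card_of_injOn Prod.snd
          · intro q hq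
            rw [Finset.mem_coe, Finset.mem_filter, hQ, Finset.mem_filter] at hq
            obtain ⟨⟨-, hne, hne1, hne2⟩, hfst⟩ := hq
            subst hfst
            simp only [Finset.mem_coe, Finset.mem_compl, Finset.mem_insert, Finset.mem_singleton]
            push_neg
            refine ⟨fun h => hne h.symm, hne1, fun h => hne2 ?_⟩
            rw [h]; open Fin.CommRing in ring
          · intro q hq q' hq' h
            rw [Finset.mem_coe, Finset.mem_filter] at hq hq'
            exact Prod.ext (hq.2.trans hq'.2.symm) h
        rw [Finset.card_compl, hcard3, Fintype.card_fin] at hle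
        exact hle
      calc ∑ i : Fin n, (Q.filter fun q => q.1 = i).card
          ≤ ∑ _i : Fin n, (n - 3) := Finset.sum_le_sum (fun i _ => hfib i)
        _ = n * (n - 3) := by simp [Finset.sum_const, Finset.card_univ]
    calc P.card * 2 = (P ∪ P.image Prod.swap).card := hunion
      _ ≤ Q.card := Finset.card_le_card (Finset.union_subset hPQ hP'Q)
      _ ≤ n * (n - 3) := hQcard
  refine ⟨Set.Finite.subset (P.image g).finite_toSet hsub, ?_⟩
  calc _ ≤ (↑(P.image g) : Set (EuclideanSpace ℝ (Fin 2))).ncard :=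
        Set.ncard_le_ncard hsub (P.image g).finite_toSet
    _ = (P.image g).card := Set.ncard_coe_finset _
    _ ≤ P.card := Finset.card_image_le
    _ ≤ n * (n - 3) / 2 := hPcard
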